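/- Let X be a regular Hausdorff space, D a countable subset of X, and z ∈ X. Suppose for each α < ω₁ we are given infinite sets a_α, b_α ⊆ D with a_α ∩ b_α = ∅ and a point y_α ∈ X such that: (i) the set a_α converges to z; (ii) the set b_α converges to y_α; and (iii) for all distinct α, β < ω₁ the set (a_α ∩ b_β) ∪ (a_β ∩ b_α) is non-empty. Then the ω₁-sequence ⟨y_α : α < ω₁⟩ converges to z. -/

import Mathlib

open Ordinal Topology

/-- The first uncountable ordinal `ω₁`, as a (well-ordered) type. -/
abbrev Omega1 : Type := (Ordinal.omega 1).ToType

/-- An `ω₁`-sequence converges to `p` if every neighbourhood of `p`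
contains a tail of the sequence. -/
def ConvergesTo {X : Type*} [TopologicalSpace X] (x : Omega1 → X) (p : X) : Prop :=
  ∀ U ∈ nhds p, ∃ α : Omega1, ∀ β : Omega1, α ≤ β → x β ∈ U

/-- An infinite set `A` converges to `p` if every neighbourhood of `p` contains
all but finitely many elements of `A`. -/
def SetConvergesTo {X : Type*} [TopologicalSpace X] (A : Set X) (p : X) : Prop :=
  ∀ U ∈ nhds p, (A \ U).Finite

/-- A countable subset of `ω₁` is bounded. -/
lemma bounded_of_countable' (S : Set Omega1) (hS : S.Countable) :
    ∃ b : Omega1, ∀ s ∈ S, s < b := by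
  haveI : IsWellOrder Omega1 (· < ·) := isWellOrder_lt
  by_contra hne
  push_neg at hne
  have hcofin : IsCofinal S := fun c => hne c
  have h1 := Order.cof_le hcofin
  have hc : (ω_ 1).cof = Cardinal.aleph 1 := Cardinal.isRegular_aleph_one.cof_omega_eq
  rw [Ordinal.cof_toType, hc] at h1
  exact absurd (h1.trans hS.le_aleph0) (not_le.2 Cardinal.aleph0_lt_aleph_one)

/-- In a regular Hausdorff space, given disjoint pairs `a_α`, `b_α` of infinite subsets
of a countable set `D` with `a_α → z`, `b_α → y_α`, such that the pairs are pairwise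
"linked", the sequence `⟨y_α : α < ω₁⟩` converges to `z`. -/
theorem stmt13 {X : Type*} [TopologicalSpace X] [T2Space X] [RegularSpace X]
    (D : Set X) (hD : D.Countable) (z : X)
    (a b : Omega1 → Set X) (y : Omega1 → X)
    (ha : ∀ α, (a α).Infinite ∧ a α ⊆ D)
    (hb : ∀ α, (b α).Infinite ∧ b α ⊆ D)
    (hdisj : ∀ α, a α ∩ b α = ∅)
    (hca : ∀ α, SetConvergesTo (a α) z)
    (hcb : ∀ α, SetConvergesTo (b α) (y α))
    (hlink : ∀ α β : Omega1, α ≠ β → ((a α ∩ b β) ∪ (a β ∩ b α)).Nonempty) :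
    ConvergesTo y z := by
  intro U hU
  by_contra hcon
  push_neg at hcon
  obtain ⟨C, hCnhds, hCclosed, hCU⟩ := exists_mem_nhds_isClosed_subset hU
  set S : Set Omega1 := {γ | y γ ∉ U} with hSdef
  set g : Omega1 → Set X × Set X := fun γ => (b γ ∩ C, a γ \ C) with hg
  have hmaps : Set.MapsTo g S
      (({t | t.Finite ∧ t ⊆ D} : Set (Set X)) ×ˢ ({t | t.Finite ∧ t ⊆ D} : Set (Set X))) := by
    intro γ hγ
    refine ⟨⟨?_, fun x hx => (hb γ).2 hx.1⟩, ?_, fun x hx => (ha γ).2 hx.1⟩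
    · have hmem : Cᶜ ∈ nhds (y γ) :=
        hCclosed.isOpen_compl.mem_nhds (fun h => hγ (hCU h))
      have := hcb γ _ hmem
      simpa [Set.diff_compl] using this
    · exact hca γ C hCnhds
  have hcnt : ((({t | t.Finite ∧ t ⊆ D} : Set (Set X)) ×ˢ
      ({t | t.Finite ∧ t ⊆ D} : Set (Set X)))).Countable :=
    (Set.countable_setOf_finite_subset hD).prod (Set.countable_setOf_finite_subset hD)
  have hnotinj : ¬ Set.InjOn g S := by
    intro hinj
    have hScnt : S.Countable := hmaps.countable_of_injOn hinj hcnt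
    obtain ⟨bd, hbd⟩ := bounded_of_countable' S hScnt
    obtain ⟨β, hβ, hyβ⟩ := hcon bd
    exact absurd (hbd β hyβ) (not_lt.2 hβ)
  rw [Set.InjOn] at hnotinj
  push_neg at hnotinj
  obtain ⟨α, hα, β, hβ, hgeq, hne⟩ := hnotinj
  have hF : b α ∩ C = b β ∩ C := congrArg Prod.fst hgeq
  have hG : a α \ C = a β \ C := congrArg Prod.snd hgeq
  have key : ∀ (γ δ : Omega1), b γ ∩ C = b δ ∩ C → a γ \ C = a δ \ C →
      ∀ x, x ∈ a γ ∩ b δ → False := by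
    intro γ δ hFc hGc x hxm
    by_cases hxC : x ∈ C
    · have hx1 : x ∈ b δ ∩ C := ⟨hxm.2, hxC⟩
      rw [← hFc] at hx1
      exact (Set.eq_empty_iff_forall_notMem.1 (hdisj γ)) x ⟨hxm.1, hx1.1⟩
    · have hx1 : x ∈ a γ \ C := ⟨hxm.1, hxC⟩
      rw [hGc] at hx1
      exact (Set.eq_empty_iff_forall_notMem.1 (hdisj δ)) x ⟨hx1.1, hxm.2⟩
  obtain ⟨x, hx⟩ := hlink α β hne
  rcases hx with h | h
  · exact key α β hF hG x h
  · exact key β α hF.symm hG.symm x h
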